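/- The game chromatic number of the rook's graph K_3 □ K_3 with Bob moving first equals 4; that is, Alice has a winning strategy in the (1,1)-colouring game on K_3 □ K_3 with 4 colours when Bob moves first, and Bob has a winning strategy with 3 colours. -/

import Mathlib

variable {V : Type*} [Fintype V] [DecidableEq V]

/-- A partial colouring with palette `Fin k` is proper if adjacent vertices never
receive the same colour. -/
def ProperPartial {k : ℕ} (G : SimpleGraph V) (c : V → Option (Fin k)) : Prop :=
  ∀ v w, G.Adj v w → ∀ x, c v = some x → c w ≠ some x

/-- The number of uncoloured vertices. -/
def uncoloured {k : ℕ} (c : V → Option (Fin k)) : ℕ :=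
  (Finset.univ.filter fun v => c v = none).card

/-- A single move: properly colour one previously uncoloured vertex. -/
def GMove {k : ℕ} (G : SimpleGraph V) (c c' : V → Option (Fin k)) : Prop :=
  ∃ v x, c v = none ∧ c' = Function.update c v (some x) ∧ ProperPartial G c'

/-- A sequence of exactly `t` single moves. -/
def GMoveSeq {k : ℕ} (G : SimpleGraph V) :
    ℕ → (V → Option (Fin k)) → (V → Option (Fin k)) → Prop
  | 0, c, c' => c' = c
  | t + 1, c, c' => ∃ c'', GMove G c c'' ∧ GMoveSeq G t c'' c'

/-- A turn of a player who must colour `min t u` vertices, where `u` is the current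
number of uncoloured vertices. -/
def GTurn {k : ℕ} (G : SimpleGraph V) (t : ℕ) (c c' : V → Option (Fin k)) : Prop :=
  GMoveSeq G (min t (uncoloured c)) c c'

/-- `AliceWins G k a b turn c`: Alice has a winning strategy in the `(a,b)`-colouring
game on `G` with `k` colours from position `c`, where `turn = true` means it is
Alice's turn and `turn = false` means it is Bob's turn. Alice wins exactly when the
whole graph eventually gets coloured. -/
inductive AliceWins (G : SimpleGraph V) (k a b : ℕ) :
    Bool → (V → Option (Fin k)) → Prop
  | done (turn : Bool) (c : V → Option (Fin k)) :
      uncoloured c = 0 → AliceWins G k a b turn c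
  | aliceTurn (c c' : V → Option (Fin k)) : 0 < uncoloured c → GTurn G a c c' →
      AliceWins G k a b false c' → AliceWins G k a b true c
  | bobTurn (c : V → Option (Fin k)) : 0 < uncoloured c →
      (∃ c', GTurn G b c c') →
      (∀ c', GTurn G b c c' → AliceWins G k a b true c') →
      AliceWins G k a b false c

/-- The everywhere-uncoloured position. -/
def emptyCol (V : Type*) (k : ℕ) : V → Option (Fin k) := fun _ => none

/-- The rook's graph `K₃ □ K₃` (the Hamming graph `H₃,₃`). -/
def rook33 : SimpleGraph (Fin 3 × Fin 3) :=
  (⊤ : SimpleGraph (Fin 3)).boxProd (⊤ : SimpleGraph (Fin 3))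

/- ======================= auxiliary machinery ======================= -/

instance rook33.adjDec : DecidableRel rook33.Adj :=
  fun _ _ => decidable_of_iff _ (SimpleGraph.boxProd_adj).symm

instance properPartial.dec {k : ℕ} (G : SimpleGraph V) [DecidableRel G.Adj]
    (c : V → Option (Fin k)) : Decidable (ProperPartial G c) :=
  inferInstanceAs (Decidable (∀ v w, G.Adj v w → ∀ x, c v = some x → c w ≠ some x))

def okCol {k : ℕ} (nb : V → List V)
    (c : V → Option (Fin k)) (v : V) (x : Fin k) : Bool :=
  (nb v).all fun w => !decide (c w = some x)

def movesL (G : SimpleGraph V) [DecidableRel G.Adj] {k : ℕ} (l : List V) (nb : V → List V)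
    (c : V → Option (Fin k)) : List (V → Option (Fin k)) :=
  (l.filter fun v => decide (c v = none)).flatMap fun v =>
    ((List.finRange k).filter fun x => okCol nb c v x).map fun x =>
      Function.update c v (some x)

def awB (G : SimpleGraph V) [DecidableRel G.Adj] {k : ℕ} (l : List V) (nb : V → List V) :
    ℕ → Bool → (V → Option (Fin k)) → Bool
  | 0, _, _ => true
  | n + 1, t, c =>
    let ms := movesL G l nb c
    match t with
    | true => ms.any fun c' => awB G l nb n false c'
    | false => !ms.isEmpty && ms.all fun c' => awB G l nb n true c'

lemma okCol_iff {G : SimpleGraph V} {k : ℕ} {nb : V → List V}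
    (hnb : ∀ v w, w ∈ nb v ↔ G.Adj v w) {c : V → Option (Fin k)} {v : V} {x : Fin k} :
    okCol nb c v x = true ↔ ∀ w, G.Adj v w → c w ≠ some x := by
  rw [okCol, List.all_eq_true]
  constructor
  · intro h w hadj hc
    have := h w ((hnb v w).mpr hadj)
    simp [hc] at this
  · intro h w hw
    simp [h w ((hnb v w).mp hw)]

lemma mem_movesL {G : SimpleGraph V} [DecidableRel G.Adj] {k : ℕ} {l : List V}
    {nb : V → List V} (hl : ∀ v, v ∈ l) (hnb : ∀ v w, w ∈ nb v ↔ G.Adj v w)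
    {c c' : V → Option (Fin k)} :
    c' ∈ movesL G l nb c ↔
      ∃ v x, c v = none ∧ (∀ w, G.Adj v w → c w ≠ some x) ∧
        c' = Function.update c v (some x) := by
  simp only [movesL, List.mem_flatMap, List.mem_filter, List.mem_map, List.mem_finRange,
    decide_eq_true_eq, hl, true_and, okCol_iff hnb]
  constructor
  · rintro ⟨v, hv, x, hx, rfl⟩; exact ⟨v, x, hv, hx, rfl⟩
  · rintro ⟨v, x, hv, hx, rfl⟩; exact ⟨v, hv, x, hx, rfl⟩

lemma properPartial_update {G : SimpleGraph V} {k : ℕ} {c : V → Option (Fin k)} {v : V}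
    {x : Fin k} (hp : ProperPartial G c) (hv : c v = none) :
    ProperPartial G (Function.update c v (some x)) ↔ ∀ w, G.Adj v w → c w ≠ some x := by
  constructor
  · intro hp' w hadj hw
    have hne : w ≠ v := (G.ne_of_adj hadj).symm
    have := hp' v w hadj x (by simp [Function.update_self])
    rw [Function.update_of_ne hne] at this
    exact this hw
  · intro h u w hadj y hu hw
    have huw : u ≠ w := G.ne_of_adj hadj
    by_cases huv : u = v
    · subst huv
      rw [Function.update_self] at hu
      obtain rfl : y = x := by injection hu.symm
      rw [Function.update_of_ne (Ne.symm huw)] at hw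
      exact h w hadj hw
    · rw [Function.update_of_ne huv] at hu
      by_cases hwv : w = v
      · subst hwv
        rw [Function.update_self] at hw
        obtain rfl : x = y := by injection hw
        exact h u (G.adj_symm hadj) hu
      · rw [Function.update_of_ne hwv] at hw
        exact hp u w hadj y hu hw

lemma gmove_iff_mem {G : SimpleGraph V} [DecidableRel G.Adj] {k : ℕ} {l : List V}
    {nb : V → List V} (hl : ∀ v, v ∈ l) (hnb : ∀ v w, w ∈ nb v ↔ G.Adj v w)
    {c c' : V → Option (Fin k)} (hp : ProperPartial G c) :
    GMove G c c' ↔ c' ∈ movesL G l nb c := by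
  rw [mem_movesL hl hnb]
  constructor
  · rintro ⟨v, x, hv, rfl, hp'⟩
    exact ⟨v, x, hv, (properPartial_update hp hv).mp hp', rfl⟩
  · rintro ⟨v, x, hv, hx, rfl⟩
    exact ⟨v, x, hv, rfl, (properPartial_update hp hv).mpr hx⟩

lemma uncoloured_update {k : ℕ} {c : V → Option (Fin k)} {v : V} {x : Fin k}
    (hv : c v = none) :
    uncoloured (Function.update c v (some x)) + 1 = uncoloured c := by
  unfold uncoloured
  have hset : (Finset.univ.filter fun u => Function.update c v (some x) u = none)
      = (Finset.univ.filter fun u => c u = none).erase v := by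
    ext u
    by_cases h : u = v <;> simp [h, hv, Function.update_apply]
  rw [hset, Finset.card_erase_of_mem (by simp [hv])]
  have : 0 < (Finset.univ.filter fun u => c u = none).card :=
    Finset.card_pos.mpr ⟨v, by simp [hv]⟩
  omega

lemma gmoveseq_one {G : SimpleGraph V} {k : ℕ} {c c' : V → Option (Fin k)} :
    GMoveSeq G 1 c c' ↔ GMove G c c' := by
  have h : GMoveSeq G 1 c c' ↔ ∃ c'', GMove G c c'' ∧ c' = c'' := Iff.rfl
  rw [h]
  constructor
  · rintro ⟨c'', hm, rfl⟩; exact hm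
  · intro hm; exact ⟨c', hm, rfl⟩

lemma gturn_one {G : SimpleGraph V} {k : ℕ} {c c' : V → Option (Fin k)}
    (hu : 0 < uncoloured c) : GTurn G 1 c c' ↔ GMove G c c' := by
  unfold GTurn
  rw [Nat.min_eq_left hu, gmoveseq_one]

lemma awB_iff {G : SimpleGraph V} [DecidableRel G.Adj] {k : ℕ} {l : List V}
    {nb : V → List V} (hl : ∀ v, v ∈ l) (hnb : ∀ v w, w ∈ nb v ↔ G.Adj v w) :
    ∀ (n : ℕ) (t : Bool) (c : V → Option (Fin k)), uncoloured c = n →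
      ProperPartial G c → (awB G l nb n t c = true ↔ AliceWins G k 1 1 t c) := by
  intro n
  induction n with
  | zero =>
    intro t c hc _
    exact ⟨fun _ => AliceWins.done t c hc, fun _ => rfl⟩
  | succ n ih =>
    intro t c hc hp
    have h0 : uncoloured c ≠ 0 := by omega
    have hupos : 0 < uncoloured c := Nat.pos_of_ne_zero h0
    have hmove : ∀ c', c' ∈ movesL G l nb c → uncoloured c' = n ∧ ProperPartial G c' := by
      intro c' hc'
      obtain ⟨v, x, hv, hx, rfl⟩ := (mem_movesL hl hnb).mp hc'
      have := uncoloured_update (c := c) (x := x) hv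
      exact ⟨by omega, (properPartial_update hp hv).mpr hx⟩
    cases t with
    | true =>
      have he : awB G l nb (n + 1) true c = (movesL G l nb c).any fun c' => awB G l nb n false c' := rfl
      rw [he, List.any_eq_true]
      constructor
      · rintro ⟨c', hc', hw⟩
        obtain ⟨hle, hp'⟩ := hmove c' hc'
        exact AliceWins.aliceTurn c c' hupos
          ((gturn_one hupos).mpr ((gmove_iff_mem hl hnb hp).mpr hc'))
          ((ih false c' hle hp').mp hw)
      · intro hw
        cases hw with
        | done _ _ hz => exact absurd hz h0
        | aliceTurn _ c' _ ht hw' =>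
          have hmem := (gmove_iff_mem hl hnb hp).mp ((gturn_one hupos).mp ht)
          obtain ⟨hle, hp'⟩ := hmove c' hmem
          exact ⟨c', hmem, (ih false c' hle hp').mpr hw'⟩
    | false =>
      have he : awB G l nb (n + 1) false c
          = (!(movesL G l nb c).isEmpty && (movesL G l nb c).all fun c' => awB G l nb n true c') := rfl
      rw [he, Bool.and_eq_true, Bool.not_eq_true', List.isEmpty_eq_false_iff_exists_mem,
        List.all_eq_true]
      constructor
      · rintro ⟨⟨c₀, hc₀⟩, hall⟩
        refine AliceWins.bobTurn c hupos
          ⟨c₀, (gturn_one hupos).mpr ((gmove_iff_mem hl hnb hp).mpr hc₀)⟩ ?_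
        intro c' ht
        have hmem := (gmove_iff_mem hl hnb hp).mp ((gturn_one hupos).mp ht)
        obtain ⟨hle, hp'⟩ := hmove c' hmem
        exact (ih true c' hle hp').mp (hall c' hmem)
      · intro hw
        cases hw with
        | done _ _ hz => exact absurd hz h0
        | bobTurn _ _ hex hall =>
          obtain ⟨c₀, ht₀⟩ := hex
          refine ⟨⟨c₀, (gmove_iff_mem hl hnb hp).mp ((gturn_one hupos).mp ht₀)⟩, ?_⟩
          intro c' hmem
          obtain ⟨hle, hp'⟩ := hmove c' hmem
          exact (ih true c' hle hp').mpr
            (hall c' ((gturn_one hupos).mpr ((gmove_iff_mem hl hnb hp).mpr hmem)))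
/- ======================= symmetry transport ======================= -/

def Tmap {k : ℕ} (e : V ≃ V) (π : Fin k ≃ Fin k) (c : V → Option (Fin k)) :
    V → Option (Fin k) := fun v => Option.map π (c (e v))

lemma uncoloured_Tmap {k : ℕ} (e : V ≃ V) (π : Fin k ≃ Fin k) (c : V → Option (Fin k)) :
    uncoloured (Tmap e π c) = uncoloured c := by
  unfold uncoloured
  refine Finset.card_equiv e fun v => ?_
  simp [Tmap, Option.map_eq_none_iff]

lemma Tmap_Tmap {k : ℕ} (e : V ≃ V) (π : Fin k ≃ Fin k) (c : V → Option (Fin k)) :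
    Tmap e.symm π.symm (Tmap e π c) = c := by
  funext v
  simp [Tmap, Option.map_map]

lemma Tmap_Tmap' {k : ℕ} (e : V ≃ V) (π : Fin k ≃ Fin k) (c : V → Option (Fin k)) :
    Tmap e π (Tmap e.symm π.symm c) = c := by
  have := Tmap_Tmap e.symm π.symm c
  simpa using this

lemma properPartial_Tmap {G : SimpleGraph V} {k : ℕ} {e : V ≃ V} {π : Fin k ≃ Fin k}
    (hA : ∀ u w, G.Adj (e u) (e w) ↔ G.Adj u w) {c : V → Option (Fin k)}
    (hp : ProperPartial G c) : ProperPartial G (Tmap e π c) := by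
  intro u w hadj y hu hw
  rw [Tmap, Option.map_eq_some_iff] at hu hw
  obtain ⟨z, hz, rfl⟩ := hu
  obtain ⟨z', hz', hzz⟩ := hw
  have hz'z : z' = z := π.injective hzz
  exact hp (e u) (e w) ((hA u w).mpr hadj) z hz (hz'z ▸ hz')

lemma gmove_Tmap {G : SimpleGraph V} {k : ℕ} {e : V ≃ V} {π : Fin k ≃ Fin k}
    (hA : ∀ u w, G.Adj (e u) (e w) ↔ G.Adj u w) {c c' : V → Option (Fin k)}
    (hm : GMove G c c') : GMove G (Tmap e π c) (Tmap e π c') := by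
  obtain ⟨v, x, hv, rfl, hp'⟩ := hm
  refine ⟨e.symm v, π x, ?_, ?_, properPartial_Tmap hA hp'⟩
  · simp [Tmap, hv]
  · funext u
    by_cases h : u = e.symm v
    · subst h
      simp [Tmap, Equiv.apply_symm_apply, Function.update_self]
    · have h2 : e u ≠ v := fun hh => h (by rw [← hh, Equiv.symm_apply_apply])
      simp [Tmap, Function.update_of_ne h, Function.update_of_ne h2]

lemma gmoveseq_Tmap {G : SimpleGraph V} {k : ℕ} {e : V ≃ V} {π : Fin k ≃ Fin k}
    (hA : ∀ u w, G.Adj (e u) (e w) ↔ G.Adj u w) :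
    ∀ (n : ℕ) (c c' : V → Option (Fin k)), GMoveSeq G n c c' →
      GMoveSeq G n (Tmap e π c) (Tmap e π c') := by
  intro n
  induction n with
  | zero => intro c c' h; exact congrArg (Tmap e π) h
  | succ n ih =>
    rintro c c' ⟨c'', hm, hs⟩
    exact ⟨Tmap e π c'', gmove_Tmap hA hm, ih _ _ hs⟩

lemma gturn_Tmap {G : SimpleGraph V} {k : ℕ} {e : V ≃ V} {π : Fin k ≃ Fin k}
    (hA : ∀ u w, G.Adj (e u) (e w) ↔ G.Adj u w) {t : ℕ} {c c' : V → Option (Fin k)}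
    (ht : GTurn G t c c') : GTurn G t (Tmap e π c) (Tmap e π c') := by
  unfold GTurn at *
  rw [uncoloured_Tmap]
  exact gmoveseq_Tmap hA _ _ _ ht

lemma adj_symm_Tmap {G : SimpleGraph V} {e : V ≃ V}
    (hA : ∀ u w, G.Adj (e u) (e w) ↔ G.Adj u w) :
    ∀ u w, G.Adj (e.symm u) (e.symm w) ↔ G.Adj u w := by
  intro u w
  rw [← hA (e.symm u) (e.symm w), Equiv.apply_symm_apply, Equiv.apply_symm_apply]

lemma aliceWins_Tmap {G : SimpleGraph V} {k a b : ℕ} (e : V ≃ V) (π : Fin k ≃ Fin k)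
    (hA : ∀ u w, G.Adj (e u) (e w) ↔ G.Adj u w) {t : Bool} {c : V → Option (Fin k)}
    (h : AliceWins G k a b t c) : AliceWins G k a b t (Tmap e π c) := by
  induction h with
  | done turn c h0 => exact .done _ _ (by rw [uncoloured_Tmap]; exact h0)
  | aliceTurn c c' hu ht _ ih =>
    exact .aliceTurn _ _ (by rw [uncoloured_Tmap]; exact hu) (gturn_Tmap hA ht) ih
  | bobTurn c hu hex hall ih =>
    refine .bobTurn _ (by rw [uncoloured_Tmap]; exact hu)
      ⟨Tmap e π hex.choose, gturn_Tmap hA hex.choose_spec⟩ ?_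
    intro d hd
    have hd' : GTurn G b c (Tmap e.symm π.symm d) := by
      have h2 := gturn_Tmap (e := e.symm) (π := π.symm) (adj_symm_Tmap hA) hd
      rwa [Tmap_Tmap] at h2
    have h3 := ih _ hd'
    rwa [Tmap_Tmap'] at h3

/- ======================= rook33 specifics ======================= -/

def vlist : List (Fin 3 × Fin 3) :=
  (List.finRange 3).flatMap fun i => (List.finRange 3).map fun j => (i, j)

lemma vlist_mem : ∀ v : Fin 3 × Fin 3, v ∈ vlist := by decide

def nbF : Fin 3 × Fin 3 → List (Fin 3 × Fin 3) := fun v =>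
  [(v.1, v.2 + 1), (v.1, v.2 + 2), (v.1 + 1, v.2), (v.1 + 2, v.2)]

lemma nbF_mem : ∀ v w : Fin 3 × Fin 3, w ∈ nbF v ↔ rook33.Adj v w := by decide

def c40 : Fin 3 × Fin 3 → Option (Fin 4) :=
  Function.update (emptyCol (Fin 3 × Fin 3) 4) (0, 0) (some 0)

def c30 : Fin 3 × Fin 3 → Option (Fin 3) :=
  Function.update (emptyCol (Fin 3 × Fin 3) 3) (0, 0) (some 0)

set_option maxRecDepth 100000 in
lemma hb4 : awB rook33 vlist nbF 8 true c40 = true := by decide +kernel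

set_option maxRecDepth 100000 in
lemma hb3 : awB rook33 vlist nbF 8 true c30 = false := by decide +kernel

lemma rookAdj (σ τ : Fin 3 ≃ Fin 3) :
    ∀ u w, rook33.Adj (Equiv.prodCongr σ τ u) (Equiv.prodCongr σ τ w) ↔ rook33.Adj u w := by
  intro u w
  simp [rook33, SimpleGraph.boxProd_adj, SimpleGraph.top_adj, Equiv.prodCongr_apply,
    ne_eq, EmbeddingLike.apply_eq_iff_eq, Prod.map]

lemma Tmap_update_none {k : ℕ} (e : V ≃ V) (π : Fin k ≃ Fin k) (w : V) (y : Fin k) :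
    Tmap e π (Function.update (fun _ => none) w (some y))
      = Function.update (fun _ => none) (e.symm w) (some (π y)) := by
  funext u
  simp only [Tmap, Function.update_apply]
  by_cases h : u = e.symm w
  · have hh : e u = w := by rw [h, Equiv.apply_symm_apply]
    simp [h, hh]
  · have h2 : e u ≠ w := fun hh => h (by rw [← hh, Equiv.symm_apply_apply])
    simp [h, h2]

lemma key4 : AliceWins rook33 4 1 1 true c40 :=
  (awB_iff vlist_mem nbF_mem 8 true c40 (by decide) (by decide)).mp hb4

lemma hstep : ∀ (v : Fin 3 × Fin 3) (x : Fin 4),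
    AliceWins rook33 4 1 1 true (Function.update (emptyCol (Fin 3 × Fin 3) 4) v (some x)) := by
  intro v x
  have hA := rookAdj (Equiv.swap v.1 0) (Equiv.swap v.2 0)
  have h := aliceWins_Tmap (Equiv.prodCongr (Equiv.swap v.1 0) (Equiv.swap v.2 0))
    (Equiv.swap (0 : Fin 4) x) hA key4
  have hc : c40 = Function.update (fun _ => none) ((0, 0) : Fin 3 × Fin 3) (some (0 : Fin 4)) := rfl
  rw [hc, Tmap_update_none] at h
  have h1 : (Equiv.prodCongr (Equiv.swap v.1 0) (Equiv.swap v.2 0)).symm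
      (((0 : Fin 3), (0 : Fin 3))) = v := by
    obtain ⟨a, b⟩ := v
    have : ((0 : Fin 3), (0 : Fin 3)) = (0 : Fin 3 × Fin 3) := rfl
    simp [Equiv.prodCongr_symm, Equiv.symm_swap, this, Prod.map, Equiv.swap_apply_right,
      Prod.ext_iff]
  have h2 : Equiv.swap (0 : Fin 4) x 0 = x := Equiv.swap_apply_left _ _
  rw [h1, h2] at h
  exact h

theorem part1 : AliceWins rook33 4 1 1 false (emptyCol (Fin 3 × Fin 3) 4) := by
  have hu : 0 < uncoloured (emptyCol (Fin 3 × Fin 3) 4) := by decide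
  refine AliceWins.bobTurn _ hu ⟨c40, ?_⟩ ?_
  · exact (gturn_one hu).mpr ⟨(0, 0), 0, rfl, rfl, by decide⟩
  · intro c' ht
    obtain ⟨v, x, hv, rfl, hp'⟩ := (gturn_one hu).mp ht
    exact hstep v x

theorem part2 : ¬ AliceWins rook33 3 1 1 false (emptyCol (Fin 3 × Fin 3) 3) := by
  intro h
  have hu : 0 < uncoloured (emptyCol (Fin 3 × Fin 3) 3) := by decide
  cases h with
  | done _ _ h0 => rw [h0] at hu; exact absurd hu (lt_irrefl 0)
  | bobTurn _ _ _ hall =>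
    have W := hall c30 ((gturn_one hu).mpr ⟨(0, 0), 0, rfl, rfl, by decide⟩)
    have hb := (awB_iff vlist_mem nbF_mem 8 true c30 (by decide) (by decide)).mpr W
    rw [hb3] at hb
    exact Bool.noConfusion hb

/-- `χ_{g_B}(K₃ □ K₃) = 4`: Alice has a winning strategy with `4`
colours in the colouring game on `K₃ □ K₃` with Bob moving first, and she has none
(i.e. Bob wins) with `3` colours. -/
theorem stmt12 :
    AliceWins rook33 4 1 1 false (emptyCol (Fin 3 × Fin 3) 4) ∧
    ¬ AliceWins rook33 3 1 1 false (emptyCol (Fin 3 × Fin 3) 3) := by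
  exact ⟨part1, part2⟩
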